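/- Let U ⊆ ℂ be open and let g : ℂ → ℂ be holomorphic on U and injective on U. Then the complex derivative of g is nonvanishing on U: g'(z) ≠ 0 for every z ∈ U. -/

import Mathlib

open Complex Filter Metric Topology


/-- A holomorphic function that is injective on an open set `U ⊆ ℂ` has nonvanishing
complex derivative on `U`. -/
theorem injective_holomorphic_deriv_ne_zero
    (U : Set ℂ) (hU : IsOpen U) (g : ℂ → ℂ)
    (hg : ∀ z ∈ U, DifferentiableAt ℂ g z)
    (hinj : Set.InjOn g U) :
    ∀ z ∈ U, deriv g z ≠ 0 := by
  intro z₀ hz₀ hd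
  have hgdiff : DifferentiableOn ℂ g U := fun z hz => (hg z hz).differentiableWithinAt
  have hUnhds : U ∈ 𝓝 z₀ := hU.mem_nhds hz₀
  set f : ℂ → ℂ := fun z => g z - g z₀ with hf_def
  have hfa : AnalyticAt ℂ f z₀ :=
    (hgdiff.analyticAt hUnhds).sub analyticAt_const
  by_cases hconst : ∀ᶠ z in 𝓝 z₀, f z = 0
  · -- locally constant: contradict injectivity
    obtain ⟨r, hr, hball⟩ := Metric.mem_nhds_iff.mp (hconst.and hUnhds)
    set z₁ : ℂ := z₀ + r / 2
    have hz₁ : z₁ ∈ ball z₀ r := by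
      simp only [z₁, Metric.mem_ball, dist_eq]
      rw [show z₀ + ↑r/2 - z₀ = ((r/2 : ℝ) : ℂ) by push_cast; ring]
      rw [Complex.norm_real, Real.norm_eq_abs, abs_of_pos (by linarith)]
      linarith
    obtain ⟨hfz₁, hz₁U⟩ := hball hz₁
    have : z₁ = z₀ := hinj hz₁U hz₀ (show g z₁ = g z₀ by simpa [f, sub_eq_zero] using hfz₁)
    have hr0 : (r : ℂ) = 0 := by
      have h2 : z₀ + ↑r/2 = z₀ := this
      linear_combination 2 * h2
    exact absurd (Complex.ofReal_eq_zero.mp hr0) hr.ne'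
  · -- finite order m
    have horder : ∃ m : ℕ, analyticOrderAt f z₀ = m := by
      rcases eq_top_or_lt_top (analyticOrderAt f z₀) with h | h
      · exact absurd (analyticOrderAt_eq_top.mp h) hconst
      · exact ⟨(analyticOrderAt f z₀).toNat, (ENat.coe_toNat h.ne).symm⟩
    obtain ⟨m, hm⟩ := horder
    obtain ⟨h, hha, hh0, hfeq⟩ := (hfa.analyticOrderAt_eq_natCast (n := m)).mp hm
    -- m ≠ 0 since f z₀ = 0
    have hf0 : f z₀ = 0 := by simp [f]
    have hm0 : m ≠ 0 := by
      rintro rfl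
      have := hfeq.self_of_nhds
      simp [hf0] at this
      exact hh0 this.symm
    -- m ≠ 1 since deriv f z₀ = 0
    have hdf : deriv f z₀ = 0 := by
      have : deriv f z₀ = deriv g z₀ := by
        simp [f, deriv_sub ((hg z₀ hz₀)) (differentiableAt_const _)]
      rw [this, hd]
    have hm1 : m ≠ 1 := by
      rintro rfl
      have : deriv f z₀ = h z₀ := by
        have h1 : deriv f z₀ = deriv (fun z => (z - z₀) ^ 1 • h z) z₀ := (Filter.EventuallyEq.deriv_eq hfeq)
        rw [h1]
        have : HasDerivAt (fun z => (z - z₀) ^ 1 • h z) (h z₀) z₀ := by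
          have hd1 : HasDerivAt (fun z : ℂ => z - z₀) 1 z₀ := (hasDerivAt_id z₀).sub_const z₀
          have hd2 : HasDerivAt h (deriv h z₀) z₀ := hha.differentiableAt.hasDerivAt
          have := (hd1.smul hd2 : HasDerivAt (fun z => (z - z₀) • h z) _ z₀)
          convert this using 1
          · rfl
          · rfl
          · ext z; simp
          · simp
        exact this.deriv
      rw [hdf] at this
      exact hh0 this.symm
    have hm2 : 2 ≤ m := by omega
    have hmC : (m : ℂ) ≠ 0 := Nat.cast_ne_zero.mpr hm0
    -- m-th root of h near z₀
    set c : ℂ := Complex.exp (Complex.log (h z₀) / m) with hc_def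
    have hc0 : c ≠ 0 := Complex.exp_ne_zero _
    have hcm : c ^ m = h z₀ := by
      rw [hc_def, ← Complex.exp_nat_mul, mul_div_cancel₀ _ hmC, Complex.exp_log hh0]
    set ψ : ℂ → ℂ := fun z => c * Complex.exp (Complex.log (h z / h z₀) / m) with hψ_def
    have hψz₀ : ψ z₀ = c := by
      simp [hψ_def, div_self hh0, Complex.log_one]
    have hq : AnalyticAt ℂ (fun z => h z / h z₀) z₀ := hha.div analyticAt_const hh0
    have hψa : AnalyticAt ℂ ψ z₀ := by
      have h1 : AnalyticAt ℂ (fun z => Complex.log (h z / h z₀)) z₀ :=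
        hq.clog (by simp [div_self hh0])
      exact (analyticAt_const.mul ((h1.div analyticAt_const hmC).cexp))
    have hhne : ∀ᶠ z in 𝓝 z₀, h z ≠ 0 := hha.continuousAt.eventually_ne hh0
    have hψpow : ∀ᶠ z in 𝓝 z₀, ψ z ^ m = h z := by
      filter_upwards [hhne] with z hz
      have e1 : Complex.exp (Complex.log (h z / h z₀) / m) ^ m = h z / h z₀ := by
        rw [← Complex.exp_nat_mul, mul_div_cancel₀ _ hmC,
          Complex.exp_log (div_ne_zero hz hh0)]
      rw [hψ_def]
      simp only [mul_pow, e1, hcm]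
      field_simp
    set φ : ℂ → ℂ := fun z => (z - z₀) * ψ z with hφ_def
    have hφeq : ∀ᶠ z in 𝓝 z₀, f z = φ z ^ m := by
      filter_upwards [hfeq, hψpow] with z h1 h2
      rw [h1, hφ_def]
      simp only [smul_eq_mul, mul_pow, h2]
    have hφs : HasStrictDerivAt φ c z₀ := by
      have hψs : HasStrictDerivAt ψ (deriv ψ z₀) z₀ :=
        ((hψa.contDiffAt (n := 1)).hasStrictDerivAt one_ne_zero)
      have h2 := HasStrictDerivAt.mul ((hasStrictDerivAt_id z₀).sub_const z₀) hψs
      simp only [id_eq] at h2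
      have h3 : 1 * ψ z₀ + (z₀ - z₀) * deriv ψ z₀ = c := by simp [hψz₀]
      rw [h3] at h2
      exact h2
    have hφ0 : φ z₀ = 0 := by simp [hφ_def]
    have hmap : Filter.map φ (𝓝 z₀) = 𝓝 0 := by
      simpa [hφ0] using hφs.map_nhds_eq hc0
    -- image of a good neighborhood contains a ball around 0
    have hV : ∀ᶠ z in 𝓝 z₀, z ∈ U ∧ f z = φ z ^ m :=
      (Filter.eventually_of_mem hUnhds fun z hz => hz).and hφeq
    have himg : φ '' {z | z ∈ U ∧ f z = φ z ^ m} ∈ 𝓝 (0 : ℂ) := by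
      rw [← hmap]
      exact Filter.image_mem_map hV
    obtain ⟨δ, hδ, hballs⟩ := Metric.mem_nhds_iff.mp himg
    -- the two preimages
    set ζ : ℂ := Complex.exp (((2 * Real.pi / m : ℝ)) * Complex.I) with hζ_def
    have hζabs : ‖ζ‖ = 1 := Complex.norm_exp_ofReal_mul_I _
    have hζm : ζ ^ m = 1 := by
      rw [hζ_def, ← Complex.exp_nat_mul]
      rw [show (m : ℂ) * (((2 * Real.pi / m : ℝ)) * Complex.I) = 2 * Real.pi * Complex.I by
        push_cast; field_simp]
      exact Complex.exp_two_pi_mul_I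
    have hζ1 : ζ ≠ 1 := by
      rw [hζ_def, Ne, Complex.exp_eq_one_iff]
      rintro ⟨n, hn⟩
      have him := congrArg Complex.im hn
      simp at him
      have hπ := Real.pi_pos
      have hmR : (2 : ℝ) ≤ (m : ℝ) := by exact_mod_cast hm2
      have h1 : (n : ℝ) * m = 1 := by
        have hm0R : (m : ℝ) ≠ 0 := by positivity
        field_simp at him
        nlinarith [him]
      rcases le_or_gt n 0 with hn0 | hn0
      · have : (n : ℝ) ≤ 0 := by exact_mod_cast hn0
        nlinarith
      · have : (1 : ℝ) ≤ (n : ℝ) := by exact_mod_cast hn0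
        nlinarith
    set w : ℂ := ((δ / 2 : ℝ) : ℂ) with hw_def
    have hw0 : w ≠ 0 := by
      simp [hw_def, Complex.ofReal_eq_zero]
      positivity
    have hwabs : ‖w‖ = δ / 2 := by
      rw [hw_def, Complex.norm_real, Real.norm_eq_abs, abs_of_pos (by linarith : (0:ℝ) < δ/2)]
    have hwmem : w ∈ Metric.ball (0 : ℂ) δ := by
      rw [Metric.mem_ball, dist_zero_right, hwabs]
      linarith
    have hw'mem : ζ * w ∈ Metric.ball (0 : ℂ) δ := by
      rw [Metric.mem_ball, dist_zero_right, norm_mul, hζabs, one_mul, hwabs]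
      linarith
    obtain ⟨z₁, ⟨hz₁U, hz₁f⟩, hφ1⟩ := hballs hwmem
    obtain ⟨z₂, ⟨hz₂U, hz₂f⟩, hφ2⟩ := hballs hw'mem
    have hne : z₁ ≠ z₂ := by
      rintro rfl
      rw [hφ1] at hφ2
      exact hζ1 (by field_simp at hφ2; tauto)
    have hgeq : g z₁ = g z₂ := by
      have h1 : f z₁ = w ^ m := by rw [hz₁f, hφ1]
      have h2 : f z₂ = w ^ m := by rw [hz₂f, hφ2, mul_pow, hζm, one_mul]
      have := h1.trans h2.symm
      simpa [f, sub_left_inj] using this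
    exact hne (hinj hz₁U hz₂U hgeq)
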